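/- Let w₁,…,w_n > 0, W = diag(w), and let η ≥ 0 satisfy max_i |d_i/w_i − 1| ≤ η. Then ‖D^{-1/2} A D^{-1/2} − W^{-1/2} A W^{-1/2}‖₂ ≤ 2η + η². -/
import Mathlib


open Matrix Finset

/-- Spectral norm of a matrix: the operator norm induced by the Euclidean vector norm. -/
noncomputable def sNorm {n : ℕ} (M : Matrix (Fin n) (Fin n) ℝ) : ℝ :=
  ‖Matrix.toEuclideanCLM (𝕜 := ℝ) M‖

lemma sNorm_nonneg {n : ℕ} (M : Matrix (Fin n) (Fin n) ℝ) : 0 ≤ sNorm M :=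
  norm_nonneg _

lemma sNorm_mul_le {n : ℕ} (M N : Matrix (Fin n) (Fin n) ℝ) :
    sNorm (M * N) ≤ sNorm M * sNorm N := by
  unfold sNorm; rw [_root_.map_mul]; exact norm_mul_le _ _

lemma sNorm_add_le {n : ℕ} (M N : Matrix (Fin n) (Fin n) ℝ) :
    sNorm (M + N) ≤ sNorm M + sNorm N := by
  unfold sNorm; rw [map_add]; exact norm_add_le _ _

lemma euclidean_apply {n : ℕ} (M : Matrix (Fin n) (Fin n) ℝ) (x : EuclideanSpace ℝ (Fin n)) :
    (Matrix.toEuclideanCLM (𝕜 := ℝ) M x : Fin n → ℝ) = M.mulVec (fun j => x j) := rfl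

lemma sNorm_le_of_sq {n : ℕ} (M : Matrix (Fin n) (Fin n) ℝ) (c : ℝ) (hc : 0 ≤ c)
    (h : ∀ x : Fin n → ℝ, ∑ i, (M.mulVec x i) ^ 2 ≤ c ^ 2 * ∑ i, (x i) ^ 2) :
    sNorm M ≤ c := by
  refine ContinuousLinearMap.opNorm_le_bound _ hc fun x => ?_
  have h1 : ‖Matrix.toEuclideanCLM (𝕜 := ℝ) M x‖
      = Real.sqrt (∑ i, (M.mulVec (fun j => x j) i) ^ 2) := by
    rw [EuclideanSpace.norm_eq]
    congr 1
    refine Finset.sum_congr rfl fun i _ => ?_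
    rw [Real.norm_eq_abs, sq_abs]
    rfl
  have h2 : ‖x‖ = Real.sqrt (∑ i, (x i) ^ 2) := by
    rw [EuclideanSpace.norm_eq]
    congr 1
    exact Finset.sum_congr rfl fun i _ => by rw [Real.norm_eq_abs, sq_abs]
  rw [h1, h2]
  calc Real.sqrt (∑ i, (M.mulVec (fun j => x j) i) ^ 2)
      ≤ Real.sqrt (c ^ 2 * ∑ i, (x i) ^ 2) := Real.sqrt_le_sqrt (h _)
    _ = c * Real.sqrt (∑ i, (x i) ^ 2) := by
        rw [Real.sqrt_mul (sq_nonneg c), Real.sqrt_sq hc]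

lemma sNorm_diagonal_le {n : ℕ} (v : Fin n → ℝ) (c : ℝ) (hc : 0 ≤ c)
    (hv : ∀ i, |v i| ≤ c) : sNorm (Matrix.diagonal v) ≤ c := by
  refine sNorm_le_of_sq _ c hc fun x => ?_
  rw [Finset.mul_sum]
  refine Finset.sum_le_sum fun i _ => ?_
  rw [mulVec_diagonal]
  have h1 : (v i) ^ 2 ≤ c ^ 2 := by
    have := hv i
    nlinarith [abs_nonneg (v i), sq_abs (v i)]
  nlinarith [sq_nonneg (x i)]

lemma abs_sqrt_sub_one_le {t : ℝ} (ht : 0 ≤ t) : |Real.sqrt t - 1| ≤ |t - 1| := by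
  have hs := Real.sqrt_nonneg t
  have hsq := Real.sq_sqrt ht
  rcases le_total (Real.sqrt t) 1 with h | h
  · rw [abs_of_nonpos (by linarith), abs_of_nonpos (by nlinarith)]
    nlinarith
  · rw [abs_of_nonneg (by linarith), abs_of_nonneg (by nlinarith)]
    nlinarith

/-- The symmetrically normalized adjacency matrix has spectral norm at most 1. -/
lemma sNorm_normalized_le_one {n : ℕ}
    (A : Matrix (Fin n) (Fin n) ℝ) (hAsymm : A.IsSymm) (hA0 : ∀ i j, 0 ≤ A i j)
    (d : Fin n → ℝ) (hd : ∀ i, d i = ∑ j, A i j) (hdpos : ∀ i, 0 < d i) :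
    sNorm (Matrix.diagonal (fun i => (Real.sqrt (d i))⁻¹) * A *
      Matrix.diagonal (fun i => (Real.sqrt (d i))⁻¹)) ≤ 1 := by
  refine sNorm_le_of_sq _ 1 zero_le_one fun x => ?_
  rw [one_pow, one_mul]
  set u : Fin n → ℝ := fun j => (Real.sqrt (d j))⁻¹ * x j with hu
  have hsd : ∀ i, Real.sqrt (d i) ^ 2 = d i := fun i => Real.sq_sqrt (hdpos i).le
  have hsdpos : ∀ i, 0 < Real.sqrt (d i) := fun i => Real.sqrt_pos.2 (hdpos i)
  have hmv : ∀ i, (Matrix.diagonal (fun i => (Real.sqrt (d i))⁻¹) * A *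
      Matrix.diagonal (fun i => (Real.sqrt (d i))⁻¹)).mulVec x i
      = (Real.sqrt (d i))⁻¹ * ∑ j, A i j * u j := by
    intro i
    rw [← Matrix.mulVec_mulVec, ← Matrix.mulVec_mulVec, Matrix.mulVec_diagonal]
    congr 1
    have hux : (Matrix.diagonal fun i => (Real.sqrt (d i))⁻¹) *ᵥ x = u := by
      funext j
      rw [Matrix.mulVec_diagonal]
    rw [hux]
    rfl
  -- pointwise bound via Cauchy–Schwarz
  have key : ∀ i, ((Matrix.diagonal (fun i => (Real.sqrt (d i))⁻¹) * A *
      Matrix.diagonal (fun i => (Real.sqrt (d i))⁻¹)).mulVec x i) ^ 2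
      ≤ ∑ j, A i j * (u j) ^ 2 := by
    intro i
    rw [hmv i]
    have cs : (∑ j, A i j * u j) ^ 2 ≤ (∑ j, A i j) * ∑ j, A i j * (u j) ^ 2 := by
      have := Finset.sum_mul_sq_le_sq_mul_sq Finset.univ
        (fun j => Real.sqrt (A i j)) (fun j => Real.sqrt (A i j) * u j)
      have e2 : ∀ j, Real.sqrt (A i j) ^ 2 = A i j := fun j => Real.sq_sqrt (hA0 i j)
      have e3 : ∀ j, (Real.sqrt (A i j) * u j) ^ 2 = A i j * (u j) ^ 2 := by
        intro j; rw [mul_pow, e2]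
      simp only [e2, e3] at this
      have e1 : ∀ j ∈ Finset.univ, Real.sqrt (A i j) * (Real.sqrt (A i j) * u j)
          = A i j * u j := fun j _ => by
        rw [← mul_assoc, Real.mul_self_sqrt (hA0 i j)]
      rwa [Finset.sum_congr rfl e1] at this
    have hdi : (∑ j, A i j) = d i := (hd i).symm
    rw [hdi] at cs
    rw [mul_pow, ← Real.sqrt_inv, Real.sq_sqrt (inv_nonneg.2 (hdpos i).le)]
    calc (d i)⁻¹ * (∑ j, A i j * u j) ^ 2
        ≤ (d i)⁻¹ * (d i * ∑ j, A i j * (u j) ^ 2) := by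
          apply mul_le_mul_of_nonneg_left cs (inv_nonneg.2 (hdpos i).le)
      _ = ∑ j, A i j * (u j) ^ 2 := by
          rw [← mul_assoc, inv_mul_cancel₀ (hdpos i).ne', one_mul]
  calc ∑ i, ((Matrix.diagonal (fun i => (Real.sqrt (d i))⁻¹) * A *
        Matrix.diagonal (fun i => (Real.sqrt (d i))⁻¹)).mulVec x i) ^ 2
      ≤ ∑ i, ∑ j, A i j * (u j) ^ 2 := Finset.sum_le_sum fun i _ => key i
    _ = ∑ j, (∑ i, A i j) * (u j) ^ 2 := by
        rw [Finset.sum_comm]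
        exact Finset.sum_congr rfl fun j _ => by rw [Finset.sum_mul]
    _ = ∑ j, (x j) ^ 2 := by
        refine Finset.sum_congr rfl fun j _ => ?_
        have hcol : (∑ i, A i j) = d j := by
          rw [hd j]
          exact Finset.sum_congr rfl fun i _ => (hAsymm.apply i j).symm
        rw [hcol, hu]
        have : ((Real.sqrt (d j))⁻¹ * x j) ^ 2 = (d j)⁻¹ * (x j) ^ 2 := by
          rw [mul_pow, ← Real.sqrt_inv, Real.sq_sqrt (inv_nonneg.2 (hdpos j).le)]
        rw [this, ← mul_assoc, mul_inv_cancel₀ (hdpos j).ne', one_mul]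

/-- if `max_i |d_i/w_i − 1| ≤ η`, then
`‖D^{-1/2} A D^{-1/2} − W^{-1/2} A W^{-1/2}‖₂ ≤ 2η + η²`. -/
theorem symmetrized_transition_perturbation_bound
    (n : ℕ) [NeZero n]
    (A : Matrix (Fin n) (Fin n) ℝ) (hAsymm : A.IsSymm) (hA0 : ∀ i j, 0 ≤ A i j)
    (d : Fin n → ℝ) (hd : ∀ i, d i = ∑ j, A i j) (hdpos : ∀ i, 0 < d i)
    (w : Fin n → ℝ) (hw : ∀ i, 0 < w i)
    (η : ℝ) (hη : 0 ≤ η)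
    (hdw : ∀ i, |d i / w i - 1| ≤ η) :
    sNorm (Matrix.diagonal (fun i => (Real.sqrt (d i))⁻¹) * A *
        Matrix.diagonal (fun i => (Real.sqrt (d i))⁻¹) -
      Matrix.diagonal (fun i => (Real.sqrt (w i))⁻¹) * A *
        Matrix.diagonal (fun i => (Real.sqrt (w i))⁻¹)) ≤ 2 * η + η ^ 2 := by
  set S : Matrix (Fin n) (Fin n) ℝ :=
    Matrix.diagonal (fun i => (Real.sqrt (d i))⁻¹) * A *
      Matrix.diagonal (fun i => (Real.sqrt (d i))⁻¹) with hS
  set e : Fin n → ℝ := fun i => Real.sqrt (d i) / Real.sqrt (w i) with he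
  set E : Matrix (Fin n) (Fin n) ℝ := Matrix.diagonal e with hE
  have hsdpos : ∀ i, 0 < Real.sqrt (d i) := fun i => Real.sqrt_pos.2 (hdpos i)
  have hswpos : ∀ i, 0 < Real.sqrt (w i) := fun i => Real.sqrt_pos.2 (hw i)
  -- the perturbed matrix equals E * S * E
  have hEd : E * Matrix.diagonal (fun i => (Real.sqrt (d i))⁻¹)
      = Matrix.diagonal (fun i => (Real.sqrt (w i))⁻¹) := by
    rw [hE, diagonal_mul_diagonal]
    refine congrArg Matrix.diagonal (funext fun i => ?_)
    show e i * (Real.sqrt (d i))⁻¹ = (Real.sqrt (w i))⁻¹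
    simp only [he]
    rw [div_eq_mul_inv, mul_comm (Real.sqrt (d i)), mul_assoc,
      mul_inv_cancel₀ (hsdpos i).ne', mul_one]
  have hdE : Matrix.diagonal (fun i => (Real.sqrt (d i))⁻¹) * E
      = Matrix.diagonal (fun i => (Real.sqrt (w i))⁻¹) := by
    rw [hE, diagonal_mul_diagonal]
    refine congrArg Matrix.diagonal (funext fun i => ?_)
    show (Real.sqrt (d i))⁻¹ * e i = (Real.sqrt (w i))⁻¹
    simp only [he]
    rw [div_eq_mul_inv, ← mul_assoc, inv_mul_cancel₀ (hsdpos i).ne', one_mul]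
  have hWid : E * S * E = Matrix.diagonal (fun i => (Real.sqrt (w i))⁻¹) * A *
      Matrix.diagonal (fun i => (Real.sqrt (w i))⁻¹) := by
    rw [hS]
    calc E * (Matrix.diagonal (fun i => (Real.sqrt (d i))⁻¹) * A *
          Matrix.diagonal (fun i => (Real.sqrt (d i))⁻¹)) * E
        = (E * Matrix.diagonal (fun i => (Real.sqrt (d i))⁻¹)) * A *
          (Matrix.diagonal (fun i => (Real.sqrt (d i))⁻¹) * E) := by noncomm_ring
      _ = _ := by rw [hEd, hdE]
  rw [← hWid]
  -- eigenvalue-like bounds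
  have hSle : sNorm S ≤ 1 := sNorm_normalized_le_one A hAsymm hA0 d hd hdpos
  have heval : ∀ i, |e i - 1| ≤ η := by
    intro i
    have hsq : e i = Real.sqrt (d i / w i) := (Real.sqrt_div (hdpos i).le (w i)).symm
    have : |Real.sqrt (d i / w i) - 1| ≤ |d i / w i - 1| :=
      abs_sqrt_sub_one_le (div_nonneg (hdpos i).le (hw i).le)
    calc |e i - 1| = |Real.sqrt (d i / w i) - 1| := by rw [hsq]
      _ ≤ |d i / w i - 1| := this
      _ ≤ η := hdw i
  have hIE : sNorm (1 - E) ≤ η := by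
    have h1 : (1 : Matrix (Fin n) (Fin n) ℝ) - E = Matrix.diagonal (fun i => 1 - e i) := by
      rw [hE, ← Matrix.diagonal_one, Matrix.diagonal_sub]
    rw [h1]
    refine sNorm_diagonal_le _ η hη fun i => ?_
    rw [abs_sub_comm]
    exact heval i
  have hEle : sNorm E ≤ 1 + η := by
    refine sNorm_diagonal_le _ (1 + η) (by linarith) fun i => ?_
    have hei : 0 ≤ e i := div_nonneg (hsdpos i).le (hswpos i).le
    have := heval i
    rw [abs_of_nonneg hei]
    cases abs_le.1 this with
    | intro h1 h2 => linarith
  -- decomposition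
  have hdec : S - E * S * E = (1 - E) * S + E * S * (1 - E) := by noncomm_ring
  rw [hdec]
  have b1 : sNorm ((1 - E) * S) ≤ η := by
    calc sNorm ((1 - E) * S) ≤ sNorm (1 - E) * sNorm S := sNorm_mul_le _ _
      _ ≤ η * 1 := mul_le_mul hIE hSle (sNorm_nonneg _) hη
      _ = η := mul_one η
  have b2 : sNorm (E * S * (1 - E)) ≤ (1 + η) * η := by
    have hES : sNorm (E * S) ≤ 1 + η := by
      calc sNorm (E * S) ≤ sNorm E * sNorm S := sNorm_mul_le _ _
        _ ≤ (1 + η) * 1 := mul_le_mul hEle hSle (sNorm_nonneg _) (by linarith)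
        _ = 1 + η := mul_one _
    calc sNorm (E * S * (1 - E)) ≤ sNorm (E * S) * sNorm (1 - E) := sNorm_mul_le _ _
      _ ≤ (1 + η) * η := mul_le_mul hES hIE (sNorm_nonneg _) (by linarith)
  calc sNorm ((1 - E) * S + E * S * (1 - E))
      ≤ sNorm ((1 - E) * S) + sNorm (E * S * (1 - E)) := sNorm_add_le _ _
    _ ≤ η + (1 + η) * η := add_le_add b1 b2
    _ = 2 * η + η ^ 2 := by ring
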